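/- The quotient group ℤ[i]⁵ / (ℤ[i]-span of the columns of K̄) has exactly 162 elements. -/

import Mathlib

open Matrix

/-- The 5×5 integer matrix `D` with `D j k = 1` if `j = k`, `-1` if `j - k ≡ ±1 (mod 5)`,
and `0` otherwise. -/
def Dmat : Matrix (Fin 5) (Fin 5) ℤ := fun j k =>
  if j = k then 1
  else if (j : ZMod 5) - (k : ZMod 5) = 1 ∨ (j : ZMod 5) - (k : ZMod 5) = -1 then -1
  else 0

/-- The Gaussian integer `i`. -/
def gi : GaussianInt := ⟨0, 1⟩

/-- `K̄ = I₅ + i • D`, a symmetric 5×5 matrix over the Gaussian integers: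
`1 + i` on the diagonal, `-i` in positions with `j - k ≡ ±1 (mod 5)`, `0` elsewhere. -/
noncomputable def Kbar : Matrix (Fin 5) (Fin 5) GaussianInt :=
  1 + gi • (Dmat.map (Int.cast : ℤ → GaussianInt))


def Kexp : Matrix (Fin 5) (Fin 5) GaussianInt :=
  !![⟨1,1⟩,⟨0,-1⟩,0,0,⟨0,-1⟩; ⟨0,-1⟩,⟨1,1⟩,⟨0,-1⟩,0,0; 0,⟨0,-1⟩,⟨1,1⟩,⟨0,-1⟩,0;
     0,0,⟨0,-1⟩,⟨1,1⟩,⟨0,-1⟩; ⟨0,-1⟩,0,0,⟨0,-1⟩,⟨1,1⟩]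
def Umat : Matrix (Fin 5) (Fin 5) GaussianInt :=
  !![1,0,0,0,0; ⟨1,-1⟩,1,0,0,0; ⟨-1,-2⟩,⟨1,-1⟩,1,0,0; ⟨-4,0⟩,⟨-1,-2⟩,⟨1,-1⟩,1,0;
     ⟨1,-2⟩,1,⟨0,1⟩,⟨0,1⟩,1]
def Uinv : Matrix (Fin 5) (Fin 5) GaussianInt :=
  !![1,0,0,0,0; ⟨-1,1⟩,1,0,0,0; 1,⟨-1,1⟩,1,0,0; 0,1,⟨-1,1⟩,1,0; 0,0,1,⟨0,-1⟩,1]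
def Vmat : Matrix (Fin 5) (Fin 5) GaussianInt :=
  !![0,0,0,0,1; 1,0,0,⟨-1,0⟩,⟨0,1⟩; 0,1,0,⟨-1,1⟩,⟨0,1⟩; 0,0,1,⟨1,2⟩,1; 0,0,0,1,⟨1,-2⟩]
def Vinv : Matrix (Fin 5) (Fin 5) GaussianInt :=
  !![⟨-1,1⟩,1,0,0,1; ⟨1,2⟩,0,1,0,⟨1,-1⟩; ⟨4,0⟩,0,0,1,⟨-1,-2⟩; ⟨-1,2⟩,0,0,0,1; 1,0,0,0,0]
def dvec : Fin 5 → GaussianInt := ![⟨0,-1⟩,⟨0,-1⟩,⟨0,-1⟩,⟨0,3⟩,⟨3,-3⟩]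

lemma hK : Kbar = Kexp := by
  refine Matrix.ext fun i j => ?_
  fin_cases i <;> fin_cases j <;> decide

lemma hUKV : Umat * Kexp * Vmat = diagonal dvec := by
  refine Matrix.ext fun i j => ?_
  fin_cases i <;> fin_cases j <;> decide

lemma hUU : Umat * Uinv = 1 := by
  refine Matrix.ext fun i j => ?_ ; fin_cases i <;> fin_cases j <;> decide
lemma hUU' : Uinv * Umat = 1 := by
  refine Matrix.ext fun i j => ?_ ; fin_cases i <;> fin_cases j <;> decide
lemma hVV : Vmat * Vinv = 1 := by
  refine Matrix.ext fun i j => ?_ ; fin_cases i <;> fin_cases j <;> decide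

noncomputable def eU : (Fin 5 → GaussianInt) ≃ₗ[GaussianInt] (Fin 5 → GaussianInt) :=
  LinearEquiv.ofLinear Umat.mulVecLin Uinv.mulVecLin
    (by rw [← Matrix.mulVecLin_mul, hUU, Matrix.mulVecLin_one])
    (by rw [← Matrix.mulVecLin_mul, hUU', Matrix.mulVecLin_one])

lemma hrange : Submodule.map (eU : (Fin 5 → GaussianInt) →ₗ[GaussianInt] (Fin 5 → GaussianInt))
    (LinearMap.range Kbar.mulVecLin) = LinearMap.range (diagonal dvec).mulVecLin := by
  have hVsurj : LinearMap.range Vmat.mulVecLin = ⊤ := by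
    rw [LinearMap.range_eq_top]
    intro y
    refine ⟨Vinv.mulVecLin y, ?_⟩
    show Vmat.mulVecLin (Vinv.mulVecLin y) = y
    rw [← LinearMap.comp_apply, ← Matrix.mulVecLin_mul, hVV, Matrix.mulVecLin_one]
    rfl
  have h1 : (eU : (Fin 5 → GaussianInt) →ₗ[GaussianInt] (Fin 5 → GaussianInt)) = Umat.mulVecLin := rfl
  have hL : LinearMap.range ((Umat*Kexp*Vmat).mulVecLin)
      = LinearMap.range ((Umat*Kexp).mulVecLin) := by
    rw [Matrix.mulVecLin_mul (Umat*Kexp) Vmat, LinearMap.range_comp_of_range_eq_top _ hVsurj]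
  rw [h1, ← LinearMap.range_comp, ← Matrix.mulVecLin_mul, hK, ← hUKV, hL]

lemma hdiag : LinearMap.range (diagonal dvec).mulVecLin
    = Submodule.pi Set.univ (fun i => (Ideal.span {dvec i} : Submodule GaussianInt GaussianInt)) := by
  ext v
  constructor
  · rintro ⟨x, rfl⟩ i -
    simp only [Matrix.mulVecLin_apply, Matrix.mulVec_diagonal]
    exact Ideal.mem_span_singleton.mpr (dvd_mul_right _ _)
  · intro h
    choose x hx using fun i => Ideal.mem_span_singleton.mp (h i (Set.mem_univ i))
    refine ⟨x, funext fun i => ?_⟩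
    simp only [Matrix.mulVecLin_apply, Matrix.mulVec_diagonal]
    exact (hx i).symm

def gEquiv : GaussianInt ≃ₗ[ℤ] (Fin 2 → ℤ) where
  toFun z := ![z.re, z.im]
  invFun v := ⟨v 0, v 1⟩
  map_add' x y := by funext i; fin_cases i <;> simp [Zsqrtd.re_add, Zsqrtd.im_add]
  map_smul' n x := by
    funext i
    fin_cases i <;> simp [zsmul_eq_mul, Zsqrtd.re_mul, Zsqrtd.im_mul, Zsqrtd.re_intCast,
      Zsqrtd.im_intCast]
  left_inv z := by simp
  right_inv v := by funext i; fin_cases i <;> simp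

noncomputable def gBasis : Module.Basis (Fin 2) ℤ GaussianInt := Module.Basis.ofEquivFun gEquiv

instance : Module.Free ℤ GaussianInt := Module.Free.of_basis gBasis
instance : Module.Finite ℤ GaussianInt := Module.Finite.of_basis gBasis
instance : Infinite GaussianInt :=
  Infinite.of_injective (fun n : ℤ => (⟨n, 0⟩ : GaussianInt))
    (fun a b h => by simpa [Zsqrtd.ext_iff] using h)

lemma gnorm (d : GaussianInt) : Algebra.norm ℤ d = d.re * d.re + d.im * d.im := by
  rw [Algebra.norm_eq_matrix_det gBasis, Matrix.det_fin_two]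
  have h : ∀ i j, Algebra.leftMulMatrix gBasis d i j
      = gEquiv (d * gEquiv.symm (Pi.single j 1)) i := by
    intro i j
    rw [Algebra.leftMulMatrix_eq_repr_mul]
    simp [gBasis, Module.Basis.ofEquivFun, Finsupp.linearEquivFunOnFinite, Finsupp.single_eq_pi_single]
    exact congrArg (fun v => gEquiv (d * gEquiv.symm v) i) (Finsupp.single_eq_pi_single j 1)
  simp only [h]
  simp [gEquiv, Zsqrtd.re_mul, Zsqrtd.im_mul, Pi.single_apply, Zsqrtd.ext_iff]
  try ring

lemma gcard (d : GaussianInt) :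
    Nat.card (GaussianInt ⧸ Ideal.span {d}) = (d.re * d.re + d.im * d.im).natAbs := by
  rw [← Submodule.cardQuot_apply, ← Ideal.absNorm_apply, Ideal.absNorm_span_singleton, gnorm]

/-- the quotient `ℤ[i]⁵ / (ℤ[i]-span of the columns of K̄)` has exactly
162 elements. -/
theorem stmt_2 :
    Nat.card ((Fin 5 → GaussianInt) ⧸ LinearMap.range Kbar.mulVecLin) = 162 := by
  have e1 : ((Fin 5 → GaussianInt) ⧸ LinearMap.range Kbar.mulVecLin) ≃ₗ[GaussianInt]
      ((Fin 5 → GaussianInt) ⧸ LinearMap.range (diagonal dvec).mulVecLin) :=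
    Submodule.Quotient.equiv _ _ eU hrange
  have e2 := Submodule.quotEquivOfEq _ _ hdiag
  have e3 := Submodule.quotientPi
    (fun i : Fin 5 => (Ideal.span {dvec i} : Submodule GaussianInt GaussianInt))
  rw [Nat.card_congr ((e1.trans (e2.trans e3)).toEquiv), Nat.card_pi, Fin.prod_univ_five]
  have h0 : dvec 0 = ⟨0,-1⟩ := rfl
  have h1 : dvec 1 = ⟨0,-1⟩ := rfl
  have h2 : dvec 2 = ⟨0,-1⟩ := rfl
  have h3 : dvec 3 = ⟨0,3⟩ := rfl
  have h4 : dvec 4 = ⟨3,-3⟩ := rfl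
  rw [h0, h1, h2, h3, h4]; simp only [gcard]
  norm_num
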